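/- If f : ℝ → ℝ is (s,[0,1])-triangle and g : ℝ → ℝ is (t,[0,1])-triangle, then the composition f ∘ g is (2st,[0,1])-triangle. -/

import Mathlib

open MeasureTheory
open scoped ENNReal

noncomputable section

/-- `f` is `(t,[0,1])`-triangle (0-indexed breakpoints `a 0 < ⋯ < a (2t)`). -/
def IsTriangle (f : ℝ → ℝ) (t : ℕ) : Prop :=
  0 < t ∧ ContinuousOn f (Set.Icc 0 1) ∧
  ∃ a : ℕ → ℝ, a 0 = 0 ∧ a (2*t) = 1 ∧
    (∀ i j, i < j → j ≤ 2*t → a i < a j) ∧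
    (∀ i, i + 2 ≤ 2*t → f (a i) = f (a (i+2))) ∧
    f (a 0) = 0 ∧ f (a 1) = 1 ∧
    (∀ i, i < 2*t →
      (Even i → StrictMonoOn f (Set.Icc (a i) (a (i+1)))) ∧
      (Odd i → StrictAntiOn f (Set.Icc (a i) (a (i+1)))))

lemma tri_alt (h : ℝ → ℝ) (a : ℕ → ℝ) (n : ℕ)
    (hper : ∀ i, i + 2 ≤ n → h (a i) = h (a (i+2)))
    (h0 : h (a 0) = 0) (h1 : h (a 1) = 1) :
    ∀ i, i ≤ n → h (a i) = if Even i then 0 else 1 := by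
  intro i
  induction i using Nat.strong_induction_on with
  | _ i ih =>
    intro hi
    match i with
    | 0 => simpa using h0
    | 1 => simpa [Nat.even_iff] using h1
    | (j+2) =>
      have hpar : Even (j+2) ↔ Even j := by
        rw [Nat.even_iff, Nat.even_iff]; omega
      rw [← hper j (by omega), ih j (by omega) (by omega), if_congr hpar rfl rfl]

lemma tri_cover (b : ℕ → ℝ) (n : ℕ) (hn : 0 < n) :
    ∀ x, b 0 ≤ x → x ≤ b n → ∃ j, j < n ∧ x ∈ Set.Icc (b j) (b (j+1)) := by
  induction n with
  | zero => omega
  | succ n ih =>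
    intro x hx0 hxn
    rcases Nat.eq_zero_or_pos n with h0 | hpos
    · subst h0; exact ⟨0, by omega, hx0, hxn⟩
    · by_cases hxm : x ≤ b n
      · obtain ⟨j, hj, hmem⟩ := ih hpos x hx0 hxm
        exact ⟨j, by omega, hmem⟩
      · exact ⟨n, by omega, le_of_not_ge hxm, hxn⟩

/-- Lemma 3.7: the composition of an `(s,[0,1])`-triangle and a `(t,[0,1])`-triangle
function is `(2st,[0,1])`-triangle. -/
theorem triangle_comp (f g : ℝ → ℝ) (s t : ℕ)
    (hf : IsTriangle f s) (hg : IsTriangle g t) :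
    IsTriangle (f ∘ g) (2 * s * t) := by
  obtain ⟨hs, hfc, a, ha0, haN, hamono, hfper, hfa0, hfa1, hfpiece⟩ := hf
  obtain ⟨ht, hgc, b, hb0, hbN, hbmono, hgper, hgb0, hgb1, hgpiece⟩ := hg
  have hs2 : 0 < 2*s := by omega
  have hfval := tri_alt f a (2*s) hfper hfa0 hfa1
  have hgval := tri_alt g b (2*t) hgper hgb0 hgb1
  have hale : ∀ i j, i ≤ j → j ≤ 2*s → a i ≤ a j := by
    intro i j hij hj
    rcases eq_or_lt_of_le hij with h | h
    · exact h ▸ le_refl _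
    · exact (hamono i j h hj).le
  have hble : ∀ i j, i ≤ j → j ≤ 2*t → b i ≤ b j := by
    intro i j hij hj
    rcases eq_or_lt_of_le hij with h | h
    · exact h ▸ le_refl _
    · exact (hbmono i j h hj).le
  have haIcc : ∀ k, k ≤ 2*s → a k ∈ Set.Icc (0:ℝ) 1 :=
    fun k hk => ⟨ha0 ▸ hale 0 k (by omega) hk, haN ▸ hale k (2*s) hk le_rfl⟩
  have hgsub : ∀ q, q < 2*t → Set.Icc (b q) (b (q+1)) ⊆ Set.Icc (0:ℝ) 1 := by
    intro q hq
    exact Set.Icc_subset_Icc (hb0 ▸ hble 0 q (by omega) (by omega))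
      (hbN ▸ hble (q+1) (2*t) (by omega) le_rfl)
  have hginj : ∀ q, q < 2*t → Set.InjOn g (Set.Icc (b q) (b (q+1))) := by
    intro q hq
    rcases Nat.even_or_odd q with he | ho
    · exact ((hgpiece q hq).1 he).injOn
    · exact ((hgpiece q hq).2 ho).injOn
  have hsurj : ∀ q, q < 2*t → ∀ y ∈ Set.Icc (0:ℝ) 1,
      ∃ x ∈ Set.Icc (b q) (b (q+1)), g x = y := by
    intro q hq y hy
    have hle : b q ≤ b (q+1) := hble q (q+1) (by omega) (by omega)
    have hcont : ContinuousOn g (Set.Icc (b q) (b (q+1))) := hgc.mono (hgsub q hq)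
    rcases Nat.even_or_odd q with he | ho
    · have hq1 : ¬ Even (q+1) := by rw [Nat.even_iff] at he ⊢; omega
      have h0 : g (b q) = 0 := by rw [hgval q (by omega)]; simp [he]
      have h1 : g (b (q+1)) = 1 := by rw [hgval (q+1) (by omega)]; simp [hq1]
      have := intermediate_value_Icc hle hcont
      rw [h0, h1] at this
      obtain ⟨x, hx, hgx⟩ := this hy
      exact ⟨x, hx, hgx⟩
    · have he : ¬ Even q := Nat.not_even_iff_odd.mpr ho
      have hq1 : Even (q+1) := by rw [Nat.even_iff] at he ⊢; omega
      have h0 : g (b (q+1)) = 0 := by rw [hgval (q+1) (by omega)]; simp [hq1]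
      have h1 : g (b q) = 1 := by rw [hgval q (by omega)]; simp [he]
      have := intermediate_value_Icc' hle hcont
      rw [h0, h1] at this
      obtain ⟨x, hx, hgx⟩ := this hy
      exact ⟨x, hx, hgx⟩
  have key : ∀ i, i < 2*s*(2*t) → ∃ x, x ∈ Set.Icc (b (i/(2*s))) (b (i/(2*s)+1)) ∧
      g x = a (if Even (i/(2*s)) then i % (2*s) else 2*s - i % (2*s)) := by
    intro i hi
    have hi' : i < 2*t*(2*s) := by rw [mul_comm]; exact hi
    have hq : i/(2*s) < 2*t := (Nat.div_lt_iff_lt_mul hs2).mpr hi'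
    have hr : i % (2*s) < 2*s := Nat.mod_lt _ hs2
    have hk : (if Even (i/(2*s)) then i % (2*s) else 2*s - i % (2*s)) ≤ 2*s := by
      split <;> omega
    obtain ⟨x, hx, hgx⟩ := hsurj _ hq _ (haIcc _ hk)
    exact ⟨x, hx, hgx⟩
  choose c0 hc0 using key
  set c : ℕ → ℝ := fun i => if h : i < 2*s*(2*t) then c0 i h else 1 with hc_def
  have hcpos : ∀ i (h : i < 2*s*(2*t)), c i = c0 i h := by
    intro i h; simp only [hc_def]; rw [dif_pos h]
  have hcend : c (2*s*(2*t)) = 1 := by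
    simp only [hc_def]; rw [dif_neg (by omega)]
  -- the main structural fact
  have hF1 : ∀ i q, q < 2*t → 2*s*q ≤ i → i ≤ 2*s*(q+1) →
      c i ∈ Set.Icc (b q) (b (q+1)) ∧
      g (c i) = a (if Even q then i - 2*s*q else 2*s*(q+1) - i) := by
    intro i q hq hlo hhi
    have e2 : 2*s*(q+1) = 2*s*q + 2*s := by ring
    rcases lt_or_eq_of_le hhi with hlt | heq
    · -- interior of piece q (or its left endpoint)
      have hmul : 2*s*(q+1) ≤ 2*s*(2*t) := Nat.mul_le_mul_left (2*s) (by omega)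
      have hiM : i < 2*s*(2*t) := by omega
      have h1 : q * (2*s) ≤ i := by rw [mul_comm]; exact hlo
      have h2 : i < (q+1) * (2*s) := by rw [mul_comm]; exact hlt
      have hdiv : i / (2*s) = q := Nat.div_eq_of_lt_le h1 h2
      have hmod : i % (2*s) = i - 2*s*q := by
        have := Nat.div_add_mod i (2*s); rw [hdiv] at this; omega
      have hspec := hc0 i hiM
      rw [hdiv, hmod] at hspec
      rw [hcpos i hiM]
      refine ⟨hspec.1, ?_⟩
      rw [hspec.2]
      rcases Nat.even_or_odd q with he | ho
      · simp [he]
      · have he' : ¬ Even q := Nat.not_even_iff_odd.mpr ho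
        simp only [he', if_false]
        congr 1
        omega
    · -- i = 2*s*(q+1) : c i is the breakpoint b (q+1)
      subst heq
      have hcb : c (2*s*(q+1)) = b (q+1) := by
        rcases lt_or_eq_of_le (show q+1 ≤ 2*t by omega) with hq1 | hq1
        · have hiM : 2*s*(q+1) < 2*s*(2*t) := by
            have h4 := Nat.mul_le_mul_left (2*s) (show q+2 ≤ 2*t by omega)
            have e3 : 2*s*(q+2) = 2*s*q + 2*s + 2*s := by ring
            omega
          have h1 : (q+1) * (2*s) ≤ 2*s*(q+1) := by rw [mul_comm]
          have h2 : 2*s*(q+1) < (q+1+1) * (2*s) := by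
            have : (q+1+1) * (2*s) = 2*s*(q+1) + 2*s := by ring
            omega
          have hdiv : (2*s*(q+1)) / (2*s) = q+1 := Nat.div_eq_of_lt_le h1 h2
          have hmod : (2*s*(q+1)) % (2*s) = 0 := Nat.mul_mod_right _ _
          have hspec := hc0 (2*s*(q+1)) hiM
          rw [hcpos _ hiM]
          rw [hdiv, hmod] at hspec
          have hgb : g (b (q+1)) = if Even (q+1) then (0:ℝ) else 1 :=
            hgval (q+1) (by omega)
          have hgc0 : g (c0 (2*s*(q+1)) hiM) = if Even (q+1) then (0:ℝ) else 1 := by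
            rw [hspec.2]
            rcases Nat.even_or_odd (q+1) with he | ho
            · simp [he, ha0]
            · have he' : ¬ Even (q+1) := Nat.not_even_iff_odd.mpr ho
              simp only [he', if_false]
              have : 2*s - 0 = 2*s := by omega
              rw [this, haN]
          exact hginj (q+1) hq1 hspec.1
            ⟨le_refl _, hble (q+1) (q+2) (by omega) (by omega)⟩ (by rw [hgc0, hgb])
        · have : 2*s*(q+1) = 2*s*(2*t) := by rw [hq1]
          rw [this, hcend, hq1, hbN]
      rw [hcb]
      have hq1even : Even (q+1) ↔ ¬ Even q := by
        rw [Nat.even_iff, Nat.even_iff]; omega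
      constructor
      · exact ⟨hble q (q+1) (by omega) (by omega), le_refl _⟩
      · rw [hgval (q+1) (by omega)]
        rcases Nat.even_or_odd q with he | ho
        · have : ¬ Even (q+1) := by rw [Nat.even_iff] at he ⊢; omega
          simp only [this, if_false, he, if_true]
          have : 2*s*(q+1) - 2*s*q = 2*s := by omega
          rw [this, haN]
        · have he' : ¬ Even q := Nat.not_even_iff_odd.mpr ho
          have : Even (q+1) := by rw [Nat.even_iff] at he' ⊢; omega
          simp only [this, if_true, he', if_false]
          have h0 : 2*s*(q+1) - 2*s*(q+1) = 0 := by omega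
          rw [h0, ha0]
  have hfind : ∀ i, i < 2*s*(2*t) → ∃ q, q < 2*t ∧ 2*s*q ≤ i ∧ i + 1 ≤ 2*s*(q+1) := by
    intro i hi
    have hi' : i < 2*t*(2*s) := by rw [mul_comm]; exact hi
    refine ⟨i/(2*s), (Nat.div_lt_iff_lt_mul hs2).mpr hi', ?_, ?_⟩
    · rw [mul_comm]; exact Nat.div_mul_le_self i (2*s)
    · have hdam := Nat.div_add_mod i (2*s)
      have hm := Nat.mod_lt i hs2
      have e2 : 2*s*(i/(2*s)+1) = 2*s*(i/(2*s)) + 2*s := by ring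
      omega
  have hstep : ∀ i, i + 1 ≤ 2*s*(2*t) → c i < c (i+1) := by
    intro i hi1
    obtain ⟨q, hq, hlo, hhi1⟩ := hfind i (by omega)
    have e2 : 2*s*(q+1) = 2*s*q + 2*s := by ring
    obtain ⟨hm1, hv1⟩ := hF1 i q hq hlo (by omega)
    obtain ⟨hm2, hv2⟩ := hF1 (i+1) q hq (by omega) hhi1
    rcases Nat.even_or_odd q with he | ho
    · have hgm := (hgpiece q hq).1 he
      rw [if_pos he] at hv1 hv2
      have hk2 : (i+1) - 2*s*q = (i - 2*s*q) + 1 := by omega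
      rw [hk2] at hv2
      have hlt : a (i - 2*s*q) < a ((i - 2*s*q)+1) := hamono _ _ (by omega) (by omega)
      exact (hgm.lt_iff_lt hm1 hm2).mp (by rw [hv1, hv2]; exact hlt)
    · have hga := (hgpiece q hq).2 ho
      have he' : ¬ Even q := Nat.not_even_iff_odd.mpr ho
      rw [if_neg he'] at hv1 hv2
      have hk1 : 2*s*(q+1) - i = (2*s*(q+1) - (i+1)) + 1 := by omega
      rw [hk1] at hv1
      have hlt : a (2*s*(q+1) - (i+1)) < a ((2*s*(q+1) - (i+1))+1) :=
        hamono _ _ (by omega) (by omega)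
      exact (hga.lt_iff_gt hm2 hm1).mp (by rw [hv1, hv2]; exact hlt)
  have hmonoC : ∀ i j, i < j → j ≤ 2*s*(2*t) → c i < c j := by
    intro i j
    induction j with
    | zero => omega
    | succ j ih =>
      intro hij hj
      rcases Nat.lt_or_ge i j with h | h
      · exact (ih h (by omega)).trans (hstep j hj)
      · have hij' : i = j := by omega
        subst hij'; exact hstep i hj
  have hcval : ∀ i, i ≤ 2*s*(2*t) → f (g (c i)) = if Even i then (0:ℝ) else 1 := by
    intro i hi
    obtain ⟨q, hq, hlo, hhi⟩ : ∃ q, q < 2*t ∧ 2*s*q ≤ i ∧ i ≤ 2*s*(q+1) := by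
      rcases lt_or_eq_of_le hi with h | h
      · obtain ⟨q, hq, hlo, hhi1⟩ := hfind i h
        exact ⟨q, hq, hlo, by omega⟩
      · refine ⟨2*t - 1, by omega, ?_, ?_⟩
        · have := Nat.mul_le_mul_left (2*s) (show 2*t-1 ≤ 2*t by omega)
          omega
        · have h2 : 2*t - 1 + 1 = 2*t := by omega
          rw [h2]; omega
    obtain ⟨hmem, hval⟩ := hF1 i q hq hlo hhi
    have e2 : 2*s*(q+1) = 2*s*q + 2*s := by ring
    have ee1 : 2*s*q = 2*(s*q) := by ring
    have ee2 : 2*s*(q+1) = 2*(s*(q+1)) := by ring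
    rw [hval, hfval _ (by split <;> omega)]
    have hpar : Even (if Even q then i - 2*s*q else 2*s*(q+1) - i) ↔ Even i := by
      split <;> (rw [Nat.even_iff, Nat.even_iff]; omega)
    rw [if_congr hpar rfl rfl]
  have hpieces : ∀ i, i < 2*s*(2*t) →
      (Even i → StrictMonoOn (f ∘ g) (Set.Icc (c i) (c (i+1)))) ∧
      (Odd i → StrictAntiOn (f ∘ g) (Set.Icc (c i) (c (i+1)))) := by
    intro i hi
    obtain ⟨q, hq, hlo, hhi1⟩ := hfind i hi
    have e2 : 2*s*(q+1) = 2*s*q + 2*s := by ring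
    have ee1 : 2*s*q = 2*(s*q) := by ring
    have ee2 : 2*s*(q+1) = 2*(s*(q+1)) := by ring
    obtain ⟨hm1, hv1⟩ := hF1 i q hq hlo (by omega)
    obtain ⟨hm2, hv2⟩ := hF1 (i+1) q hq (by omega) hhi1
    have hcc : c i ≤ c (i+1) := (hstep i (by omega)).le
    have hsub : Set.Icc (c i) (c (i+1)) ⊆ Set.Icc (b q) (b (q+1)) :=
      Set.Icc_subset_Icc hm1.1 hm2.2
    have hmem1 : c i ∈ Set.Icc (c i) (c (i+1)) := Set.left_mem_Icc.mpr hcc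
    have hmem2 : c (i+1) ∈ Set.Icc (c i) (c (i+1)) := Set.right_mem_Icc.mpr hcc
    rcases Nat.even_or_odd q with he | ho
    · have hgm := (hgpiece q hq).1 he
      rw [if_pos he] at hv1 hv2
      have hk2 : (i+1) - 2*s*q = (i - 2*s*q) + 1 := by omega
      rw [hk2] at hv2
      have hks : i - 2*s*q < 2*s := by omega
      have hgx : ∀ x ∈ Set.Icc (c i) (c (i+1)),
          g x ∈ Set.Icc (a (i - 2*s*q)) (a ((i - 2*s*q)+1)) := by
        intro x hx
        constructor
        · rw [← hv1]; exact hgm.monotoneOn (hsub hmem1) (hsub hx) hx.1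
        · rw [← hv2]; exact hgm.monotoneOn (hsub hx) (hsub hmem2) hx.2
      constructor
      · intro hie
        have hke : Even (i - 2*s*q) := by
          rw [Nat.even_iff] at hie ⊢; omega
        have hfm := (hfpiece _ hks).1 hke
        intro x hx y hy hxy
        exact hfm (hgx x hx) (hgx y hy) (hgm (hsub hx) (hsub hy) hxy)
      · intro hio
        have hko : Odd (i - 2*s*q) := by
          rw [Nat.odd_iff] at hio ⊢; omega
        have hfa := (hfpiece _ hks).2 hko
        intro x hx y hy hxy
        exact hfa (hgx x hx) (hgx y hy) (hgm (hsub hx) (hsub hy) hxy)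
    · have hga := (hgpiece q hq).2 ho
      have he' : ¬ Even q := Nat.not_even_iff_odd.mpr ho
      rw [if_neg he'] at hv1 hv2
      have hk1 : 2*s*(q+1) - i = (2*s*(q+1) - (i+1)) + 1 := by omega
      rw [hk1] at hv1
      have hks : 2*s*(q+1) - (i+1) < 2*s := by omega
      have hgx : ∀ x ∈ Set.Icc (c i) (c (i+1)),
          g x ∈ Set.Icc (a (2*s*(q+1) - (i+1))) (a ((2*s*(q+1) - (i+1))+1)) := by
        intro x hx
        constructor
        · rw [← hv2]; exact hga.antitoneOn (hsub hx) (hsub hmem2) hx.2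
        · rw [← hv1]; exact hga.antitoneOn (hsub hmem1) (hsub hx) hx.1
      constructor
      · intro hie
        have hko : Odd (2*s*(q+1) - (i+1)) := by
          rw [Nat.even_iff] at hie; rw [Nat.odd_iff]; omega
        have hfa := (hfpiece _ hks).2 hko
        intro x hx y hy hxy
        exact hfa (hgx y hy) (hgx x hx) (hga (hsub hx) (hsub hy) hxy)
      · intro hio
        have hke : Even (2*s*(q+1) - (i+1)) := by
          rw [Nat.odd_iff] at hio; rw [Nat.even_iff]; omega
        have hfm := (hfpiece _ hks).1 hke
        intro x hx y hy hxy
        exact hfm (hgx y hy) (hgx x hx) (hga (hsub hx) (hsub hy) hxy)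
  -- endpoints
  have hc00 : c 0 = 0 := by
    obtain ⟨hm, hv⟩ := hF1 0 0 (by omega) (Nat.zero_le _) (Nat.zero_le _)
    have h00 : (if Even 0 then 0 - 2*s*0 else 2*s*(0+1) - 0) = 0 := by simp
    rw [h00] at hv
    have hgg : g (c 0) = g (b 0) := by rw [hv, ha0, hgb0]
    have := hginj 0 (by omega) hm ⟨le_refl _, hble 0 1 (by omega) (by omega)⟩ hgg
    rw [this, hb0]
  have hmaps : Set.MapsTo g (Set.Icc (0:ℝ) 1) (Set.Icc (0:ℝ) 1) := by
    intro x hx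
    obtain ⟨j, hj, hmem⟩ := tri_cover b (2*t) (by omega) x (hb0 ▸ hx.1) (hbN ▸ hx.2)
    have hbl : b j ≤ b (j+1) := hble j (j+1) (by omega) (by omega)
    rcases Nat.even_or_odd j with he | ho
    · have hm := ((hgpiece j hj).1 he).monotoneOn
      have h0 : g (b j) = 0 := by rw [hgval j (by omega)]; simp [he]
      have h1 : g (b (j+1)) = 1 := by
        rw [hgval (j+1) (by omega)]
        simp [show ¬ Even (j+1) by rw [Nat.even_iff] at he ⊢; omega]
      exact ⟨h0 ▸ hm (Set.left_mem_Icc.mpr hbl) hmem hmem.1,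
        h1 ▸ hm hmem (Set.right_mem_Icc.mpr hbl) hmem.2⟩
    · have he' : ¬ Even j := Nat.not_even_iff_odd.mpr ho
      have hm := ((hgpiece j hj).2 ho).antitoneOn
      have h1 : g (b j) = 1 := by rw [hgval j (by omega)]; simp [he']
      have h0 : g (b (j+1)) = 0 := by
        rw [hgval (j+1) (by omega)]
        simp [show Even (j+1) by rw [Nat.even_iff] at he' ⊢; omega]
      exact ⟨h0 ▸ hm hmem (Set.right_mem_Icc.mpr hbl) hmem.2,
        h1 ▸ hm (Set.left_mem_Icc.mpr hbl) hmem hmem.1⟩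
  have hM : 2*(2*s*t) = 2*s*(2*t) := by ring
  have hMpos : 0 < 2*s*(2*t) := Nat.mul_pos (by omega) (by omega)
  refine ⟨Nat.mul_pos (by omega) ht, hfc.comp hgc hmaps, c, hc00, ?_, ?_, ?_, ?_, ?_, ?_⟩
  · rw [hM]; exact hcend
  · intro i j hij hj
    exact hmonoC i j hij (by omega)
  · intro i h2
    simp only [Function.comp_apply]
    rw [hcval i (by omega), hcval (i+2) (by omega)]
    have hpar : Even i ↔ Even (i+2) := by rw [Nat.even_iff, Nat.even_iff]; omega
    rw [if_congr hpar rfl rfl]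
  · simp only [Function.comp_apply]
    rw [hcval 0 (by omega)]; simp
  · simp only [Function.comp_apply]
    rw [hcval 1 (by omega)]
    simp [Nat.even_iff]
  · intro i hi
    exact hpieces i (by omega)
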